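/- The analytic function g(x) = x·f(arctan x) derived from a solution f of the center functional equation satisfies g(x) − x⁴ g(1/x) + g(0)(x⁴ − 1) = 0 for all x > 0, and every analytic solution of this relation is of the form g(x) = a0 + a1 x + a2 x² + a1 x³. -/

import Mathlib

open Filter Set Topology Real

lemma myEntire (c : ℕ → ℂ) (hc : ∀ r : NNReal, Summable (fun n => ‖c n‖ * (r : ℝ) ^ n)) :
    ∃ F : ℂ → ℂ, AnalyticOnNhd ℂ F Set.univ ∧ ∀ z : ℂ, HasSum (fun n => c n * z ^ n) (F z) := by
  set p := FormalMultilinearSeries.ofScalars ℂ c with hp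
  have hrad : p.radius = ⊤ := by
    apply p.radius_eq_top_of_summable_norm
    intro r
    have : ∀ n, ‖p n‖ = ‖c n‖ := fun n => FormalMultilinearSeries.ofScalars_norm ℂ c n
    simpa [this] using hc r
  have hball : HasFPowerSeriesOnBall p.sum p 0 p.radius :=
    p.hasFPowerSeriesOnBall (by rw [hrad]; exact ENNReal.zero_lt_top)
  have hmem : ∀ z : ℂ, z ∈ EMetric.ball (0 : ℂ) p.radius := by
    intro z; rw [hrad]; exact edist_lt_top z 0
  refine ⟨p.sum, fun z _ => ?_, fun z => ?_⟩
  · exact hball.analyticOnNhd z (hmem z)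
  · have h := hball.hasSum (hmem z)
    rw [zero_add] at h
    have heq : (fun n => p n fun _ => z) = fun n => c n * z ^ n := by
      funext n
      rw [hp, FormalMultilinearSeries.ofScalars_apply_eq, smul_eq_mul]
    rwa [heq] at h

lemma myPart1 (f g : ℝ → ℝ)
    (hg : ∀ x : ℝ, g x = x * f (arctan x))
    (heq : ∀ α β γ : ℝ, α ∈ Set.Ico 0 (π / 2) → β ∈ Set.Ico 0 (π / 2) →
      γ ∈ Set.Ico 0 (π / 2) → α + β + γ = π / 2 →
      tan α + tan β ≠ 0 → tan β + tan γ ≠ 0 → tan γ + tan α ≠ 0 →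
      (f α * tan α - f β * tan β) / (tan α + tan β) +
        (f β * tan β - f γ * tan γ) / (tan β + tan γ) +
        (f γ * tan γ - f α * tan α) / (tan γ + tan α) = 0) :
    ∀ x : ℝ, 0 < x → g x - x ^ 4 * g (1 / x) = 0 := by
  intro x hx
  have hx' : (0:ℝ) < x⁻¹ := by positivity
  have hα : arctan x ∈ Set.Ico 0 (π / 2) := ⟨by rw [← arctan_zero]; exact arctan_strictMono.monotone hx.le, arctan_lt_pi_div_two x⟩
  have hβ : (0:ℝ) ∈ Set.Ico 0 (π / 2) := ⟨le_refl 0, pi_div_two_pos⟩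
  have hγ : arctan x⁻¹ ∈ Set.Ico 0 (π / 2) := ⟨by rw [← arctan_zero]; exact arctan_strictMono.monotone hx'.le, arctan_lt_pi_div_two _⟩
  have hsum3 : arctan x + 0 + arctan x⁻¹ = π / 2 := by
    rw [arctan_inv_of_pos hx]; ring
  have key := heq (arctan x) 0 (arctan x⁻¹) hα hβ hγ hsum3
  rw [tan_arctan, tan_arctan, tan_zero] at key
  have key' := key (by simpa using hx.ne') (by simpa using hx'.ne') (by positivity)
  have hgx := hg x
  have hg1x : g (1 / x) = x⁻¹ * f (arctan x⁻¹) := by rw [one_div]; exact hg x⁻¹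
  set A := f (arctan x)
  set C := f (arctan x⁻¹)
  have hxx : x⁻¹ + x ≠ 0 := by positivity
  have h1 : A = x ^ 2 * C := by
    field_simp at key'
    nlinarith [key', sq_nonneg x, hx]
  rw [hgx, hg1x, h1]
  field_simp
  ring

lemma myPoly (g : ℝ → ℝ) (a : ℕ → ℝ)
    (hsum : ∀ x : ℝ, HasSum (fun n => a n * x ^ n) (g x))
    (hg0 : g 0 = 0)
    (part1 : ∀ x : ℝ, 0 < x → g x - x ^ 4 * g (1 / x) = 0) :
    ∃ a0 a1 a2 : ℝ, ∀ x : ℝ, g x = a0 + a1 * x + a2 * x ^ 2 + a1 * x ^ 3 := by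
  classical
  set c : ℕ → ℂ := fun n => (a n : ℂ) with hc
  have hsummc : ∀ r : NNReal, Summable fun n => ‖c n‖ * (r : ℝ) ^ n := by
    intro r
    have h := ((hsum (r : ℝ)).summable).abs
    have : (fun n => |a n * (r:ℝ) ^ n|) = fun n => ‖c n‖ * (r:ℝ) ^ n := by
      funext n
      rw [abs_mul, abs_pow, abs_of_nonneg r.coe_nonneg]
      simp [hc, Complex.norm_real]
    rwa [this] at h
  obtain ⟨G, hGan, hGsum⟩ := myEntire c hsummc
  have hGreal : ∀ x : ℝ, G (x : ℂ) = ((g x : ℝ) : ℂ) := by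
    intro x
    have h1 : HasSum (fun n => c n * (x : ℂ) ^ n) ((g x : ℝ) : ℂ) := by
      have := (hsum x).mapL Complex.ofRealCLM
      simpa [hc, Complex.ofRealCLM_apply] using this
    exact (hGsum (x : ℂ)).unique h1
  -- extend functional equation
  have hrealeq : ∀ x : ℝ, 0 < x → G (x : ℂ) = (x : ℂ) ^ 4 * G ((x : ℂ))⁻¹ := by
    intro x hx
    have h := part1 x hx
    have hinv : ((x : ℂ))⁻¹ = ((x⁻¹ : ℝ) : ℂ) := by push_cast; ring
    rw [hGreal x, hinv, hGreal x⁻¹]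
    have : g x = x ^ 4 * g (1 / x) := by linarith
    rw [this, one_div]
    push_cast
    ring
  have hfun : ∀ z : ℂ, z ≠ 0 → G z = z ^ 4 * G z⁻¹ := by
    intro z hz
    have hGS : AnalyticOnNhd ℂ G ({(0 : ℂ)}ᶜ) := fun w _ => hGan w (mem_univ w)
    have hHS : AnalyticOnNhd ℂ (fun w : ℂ => w ^ 4 * G w⁻¹) ({(0 : ℂ)}ᶜ) := by
      intro w hw
      have hw' : w ≠ 0 := hw
      have h1 : AnalyticAt ℂ (fun w : ℂ => w ^ 4) w := (analyticAt_id (𝕜 := ℂ) (E := ℂ)).pow 4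
      have h2 : AnalyticAt ℂ (G ∘ Inv.inv) w :=
        (hGan w⁻¹ (mem_univ _)).comp (analyticAt_inv hw')
      exact h1.mul h2
    have hpre : IsPreconnected ({(0 : ℂ)}ᶜ) :=
      (isConnected_compl_singleton_of_one_lt_rank
        (by rw [Complex.rank_real_complex]; norm_num) 0).isPreconnected
    have h1S : (1 : ℂ) ∈ ({(0 : ℂ)}ᶜ) := Set.mem_compl_singleton_iff.mpr one_ne_zero
    have htend : Tendsto (fun n : ℕ => (((1 + ((n : ℝ) + 1)⁻¹ : ℝ)) : ℂ))
        atTop (𝓝[≠] (1 : ℂ)) := by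
      rw [tendsto_nhdsWithin_iff]
      constructor
      · have hr : Tendsto (fun n : ℕ => (1 + ((n : ℝ) + 1)⁻¹ : ℝ)) atTop (𝓝 1) := by
          have := tendsto_one_div_add_atTop_nhds_zero_nat (𝕜 := ℝ)
          simpa [one_div] using (tendsto_const_nhds (x := (1:ℝ))).add this
        have h2 := (Complex.continuous_ofReal.tendsto 1).comp hr
        simpa [Function.comp_def] using h2
      · filter_upwards with n
        simp only [mem_compl_iff, mem_singleton_iff]
        intro h
        have : (1 + ((n : ℝ) + 1)⁻¹ : ℝ) = 1 := by exact_mod_cast h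
        have hpos : (0:ℝ) < ((n : ℝ) + 1)⁻¹ := by positivity
        linarith
    have hfreq : ∃ᶠ w in 𝓝[≠] (1 : ℂ), G w = w ^ 4 * G w⁻¹ := by
      apply htend.frequently
      apply Frequently.of_forall
      intro n
      exact hrealeq _ (by positivity)
    exact hGS.eqOn_of_preconnected_of_frequently_eq hHS hpre h1S hfreq hz
  -- tail function E
  obtain ⟨E, hEan, hEsum⟩ := myEntire (fun n => c (n + 5)) (by
    intro r
    rcases eq_or_lt_of_le r.coe_nonneg with h0 | h0
    · apply summable_of_ne_finset_zero (s := {0})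
      intro n hn
      have hn' : n ≠ 0 := by simpa using hn
      simp [← h0, zero_pow hn']
    · have h1 : Summable (fun n => ‖c (n + 5)‖ * (r : ℝ) ^ (n + 5)) := by
        have := (summable_nat_add_iff (f := fun n => ‖c n‖ * (r : ℝ) ^ n) 5).2 (hsummc r)
        simpa using this
      have h2 := h1.div_const ((r : ℝ) ^ 5)
      have : (fun n => ‖c (n + 5)‖ * (r : ℝ) ^ (n + 5) / (r : ℝ) ^ 5)
          = fun n => ‖c (n + 5)‖ * (r : ℝ) ^ n := by
        funext n
        field_simp [pow_add]
        ring
      rwa [this] at h2)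
  have hEG : ∀ z : ℂ, z ^ 5 * E z
      = G z - (c 0 + c 1 * z + c 2 * z ^ 2 + c 3 * z ^ 3 + c 4 * z ^ 4) := by
    intro z
    have h1 : HasSum (fun n => c (n + 5) * z ^ (n + 5))
        (G z - ∑ i ∈ Finset.range 5, c i * z ^ i) := by
      apply (hasSum_nat_add_iff (f := fun n => c n * z ^ n) 5).2
      simpa using hGsum z
    have h2 : HasSum (fun n => z ^ 5 * (c (n + 5) * z ^ n)) (z ^ 5 * E z) :=
      (hEsum z).mul_left _
    have h3 : (fun n => z ^ 5 * (c (n + 5) * z ^ n)) = fun n => c (n + 5) * z ^ (n + 5) := by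
      funext n; ring
    rw [h3] at h2
    have := h2.unique h1
    rw [this]
    simp [Finset.sum_range_succ]
  -- bound G on the closed unit ball
  obtain ⟨Cb, hCb⟩ : ∃ Cb, ∀ z ∈ Metric.closedBall (0:ℂ) 1, ‖G z‖ ≤ Cb :=
    (isCompact_closedBall (0:ℂ) 1).exists_bound_of_continuousOn
      (hGan.continuous.continuousOn)
  have hCb0 : 0 ≤ Cb := le_trans (norm_nonneg (G 0)) (hCb 0 (by simp))
  set S : ℝ := ‖c 0‖ + ‖c 1‖ + ‖c 2‖ + ‖c 3‖ + ‖c 4‖ with hS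
  have hS0 : 0 ≤ S := by positivity
  set K : ℝ := Cb + S with hKdef
  have hK0 : 0 ≤ K := by positivity
  have hEdecay : ∀ z : ℂ, 1 ≤ ‖z‖ → ‖E z‖ * ‖z‖ ≤ K := by
    intro z hz1
    have hzpos : (0:ℝ) < ‖z‖ := lt_of_lt_of_le one_pos hz1
    have hz0 : z ≠ 0 := by
      intro h; rw [h] at hzpos; simp at hzpos
    have hGb : ‖G z‖ ≤ Cb * ‖z‖ ^ 4 := by
      rw [hfun z hz0]
      have hinvmem : z⁻¹ ∈ Metric.closedBall (0:ℂ) 1 := by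
        rw [Metric.mem_closedBall, dist_zero_right, norm_inv]
        exact inv_le_one_of_one_le₀ hz1
      calc ‖z ^ 4 * G z⁻¹‖ = ‖z‖ ^ 4 * ‖G z⁻¹‖ := by rw [norm_mul, norm_pow]
        _ ≤ ‖z‖ ^ 4 * Cb := by
            have := hCb _ hinvmem
            exact mul_le_mul_of_nonneg_left this (by positivity)
        _ = Cb * ‖z‖ ^ 4 := mul_comm _ _
    have hP : ‖c 0 + c 1 * z + c 2 * z ^ 2 + c 3 * z ^ 3 + c 4 * z ^ 4‖ ≤ S * ‖z‖ ^ 4 := by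
      have hpow : ∀ i : ℕ, i ≤ 4 → ‖z‖ ^ i ≤ ‖z‖ ^ 4 := fun i hi =>
        pow_le_pow_right₀ hz1 hi
      have h0 := hpow 0 (by norm_num)
      have h1 := hpow 1 (by norm_num)
      have h2 := hpow 2 (by norm_num)
      have h3 := hpow 3 (by norm_num)
      calc ‖c 0 + c 1 * z + c 2 * z ^ 2 + c 3 * z ^ 3 + c 4 * z ^ 4‖
          ≤ ‖c 0‖ + ‖c 1 * z‖ + ‖c 2 * z ^ 2‖ + ‖c 3 * z ^ 3‖ + ‖c 4 * z ^ 4‖ := by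
            refine le_trans (norm_add_le _ _) ?_
            gcongr
            refine le_trans (norm_add_le _ _) ?_
            gcongr
            refine le_trans (norm_add_le _ _) ?_
            gcongr
            exact norm_add_le _ _
        _ = ‖c 0‖ + ‖c 1‖ * ‖z‖ ^ 1 + ‖c 2‖ * ‖z‖ ^ 2 + ‖c 3‖ * ‖z‖ ^ 3
            + ‖c 4‖ * ‖z‖ ^ 4 := by
            simp [norm_mul, norm_pow]
        _ ≤ ‖c 0‖ * ‖z‖ ^ 4 + ‖c 1‖ * ‖z‖ ^ 4 + ‖c 2‖ * ‖z‖ ^ 4 + ‖c 3‖ * ‖z‖ ^ 4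
            + ‖c 4‖ * ‖z‖ ^ 4 := by
            have hc0 : ‖c 0‖ = ‖c 0‖ * ‖z‖ ^ 0 := by simp
            nlinarith [norm_nonneg (c 0), norm_nonneg (c 1), norm_nonneg (c 2),
              norm_nonneg (c 3), pow_nonneg (norm_nonneg z) 4,
              mul_le_mul_of_nonneg_left h0 (norm_nonneg (c 0)),
              mul_le_mul_of_nonneg_left h1 (norm_nonneg (c 1)),
              mul_le_mul_of_nonneg_left h2 (norm_nonneg (c 2)),
              mul_le_mul_of_nonneg_left h3 (norm_nonneg (c 3))]
        _ = S * ‖z‖ ^ 4 := by rw [hS]; ring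
    have hEGz := hEG z
    have hnorm : ‖E z‖ * ‖z‖ * ‖z‖ ^ 4 ≤ K * ‖z‖ ^ 4 := by
      have h5 : ‖E z‖ * ‖z‖ * ‖z‖ ^ 4 = ‖z ^ 5 * E z‖ := by
        rw [norm_mul, norm_pow]; ring
      rw [h5, hEGz]
      calc ‖G z - (c 0 + c 1 * z + c 2 * z ^ 2 + c 3 * z ^ 3 + c 4 * z ^ 4)‖
          ≤ ‖G z‖ + ‖c 0 + c 1 * z + c 2 * z ^ 2 + c 3 * z ^ 3 + c 4 * z ^ 4‖ :=
            norm_sub_le _ _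
        _ ≤ Cb * ‖z‖ ^ 4 + S * ‖z‖ ^ 4 := add_le_add hGb hP
        _ = K * ‖z‖ ^ 4 := by rw [hKdef]; ring
    exact le_of_mul_le_mul_right hnorm (by positivity)
  -- E is bounded, hence constant, hence zero
  obtain ⟨Db, hDb⟩ : ∃ Db, ∀ z ∈ Metric.closedBall (0:ℂ) 1, ‖E z‖ ≤ Db :=
    (isCompact_closedBall (0:ℂ) 1).exists_bound_of_continuousOn
      (hEan.continuous.continuousOn)
  have hEbdd : Bornology.IsBounded (Set.range E) := by
    rw [isBounded_iff_forall_norm_le]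
    refine ⟨max K Db, ?_⟩
    rintro _ ⟨z, rfl⟩
    rcases le_or_gt ‖z‖ 1 with h | h
    · exact le_max_of_le_right (hDb z (by rwa [Metric.mem_closedBall, dist_zero_right]))
    · have h2 := hEdecay z h.le
      have h3 : ‖E z‖ ≤ ‖E z‖ * ‖z‖ := le_mul_of_one_le_right (norm_nonneg _) h.le
      exact le_max_of_le_left (h3.trans h2)
  have hEdiff : Differentiable ℂ E := fun z => (hEan z (mem_univ z)).differentiableAt
  have hEconst : ∀ z, E z = E 0 := fun z => hEdiff.apply_eq_apply_of_bounded hEbdd z 0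
  have hE0 : E 0 = 0 := by
    by_contra hne
    have hpos : 0 < ‖E 0‖ := norm_pos_iff.mpr hne
    obtain ⟨n, hn⟩ := exists_nat_gt (K / ‖E 0‖)
    have hznorm : ‖(((n+1:ℕ)):ℂ)‖ = (n:ℝ) + 1 := by
      rw [Complex.norm_natCast]; push_cast; ring
    have hn1 : (1:ℝ) ≤ ‖(((n+1:ℕ)):ℂ)‖ := by
      rw [hznorm]; have : (0:ℝ) ≤ (n:ℝ) := Nat.cast_nonneg n; linarith
    have hd := hEdecay (((n+1:ℕ)):ℂ) hn1
    rw [hEconst, hznorm] at hd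
    rw [div_lt_iff₀ hpos] at hn
    nlinarith [hd, hn, hpos]
  have hGP : ∀ z : ℂ, G z = c 0 + c 1 * z + c 2 * z ^ 2 + c 3 * z ^ 3 + c 4 * z ^ 4 := by
    intro z
    have h := hEG z
    rw [hEconst z, hE0, mul_zero] at h
    linear_combination -h
  have hgpoly : ∀ x : ℝ, g x = a 0 + a 1 * x + a 2 * x ^ 2 + a 3 * x ^ 3 + a 4 * x ^ 4 := by
    intro x
    have h := hGP (x : ℂ)
    rw [hGreal x] at h
    have h2 : ((g x : ℝ) : ℂ) =
        (((a 0 + a 1 * x + a 2 * x ^ 2 + a 3 * x ^ 3 + a 4 * x ^ 4 : ℝ)) : ℂ) := by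
      rw [h, hc]; push_cast; ring
    exact_mod_cast h2
  have ha0 : a 0 = 0 := by
    have := hgpoly 0
    rw [hg0] at this
    linarith [this]
  have e2 := part1 2 (by norm_num)
  have e3 := part1 3 (by norm_num)
  rw [hgpoly 2, hgpoly (1/2)] at e2
  rw [hgpoly 3, hgpoly (1/3)] at e3
  norm_num at e2 e3
  have ha4 : a 4 = 0 := by linarith
  have ha3 : a 3 = a 1 := by linarith
  refine ⟨a 0, a 1, a 2, fun x => ?_⟩
  rw [hgpoly x, ha3, ha4]
  ring

open Real

/-- The function `g(x) = x·f(arctan x)` derived from a solution `f` of the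
center functional equation satisfies `g(x) − x⁴·g(1/x) + g(0)(x⁴−1) = 0` for
all `x > 0`, and every analytic solution of this relation has the form
`g(x) = a₀ + a₁x + a₂x² + a₁x³`. -/
theorem stmt13 (f g : ℝ → ℝ) (a : ℕ → ℝ)
    -- `g` is analytic, given by an (everywhere convergent) power series
    (hsum : ∀ x : ℝ, HasSum (fun n => a n * x ^ n) (g x))
    (hg : ∀ x : ℝ, g x = x * f (arctan x))
    -- `f` solves the center functional equation
    (heq : ∀ α β γ : ℝ, α ∈ Set.Ico 0 (π / 2) → β ∈ Set.Ico 0 (π / 2) →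
      γ ∈ Set.Ico 0 (π / 2) → α + β + γ = π / 2 →
      tan α + tan β ≠ 0 → tan β + tan γ ≠ 0 → tan γ + tan α ≠ 0 →
      (f α * tan α - f β * tan β) / (tan α + tan β) +
        (f β * tan β - f γ * tan γ) / (tan β + tan γ) +
        (f γ * tan γ - f α * tan α) / (tan γ + tan α) = 0) :
    (∀ x : ℝ, 0 < x → g x - x ^ 4 * g (1 / x) + g 0 * (x ^ 4 - 1) = 0) ∧
      ∃ a0 a1 a2 : ℝ, ∀ x : ℝ, g x = a0 + a1 * x + a2 * x ^ 2 + a1 * x ^ 3 := by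
  have hg0 : g 0 = 0 := by simpa using hg 0
  have part1 := myPart1 f g hg heq
  constructor
  · intro x hx
    rw [hg0]
    simpa using part1 x hx
  · exact myPoly g a hsum hg0 part1
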